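/- For a fixed finite relational vocabulary τ containing < and a fixed quantifier depth d, there is an associative binary operation ⊕ on the (finite) set of complete depth-d first-order theories of finite linearly ordered τ-structures such that the depth-d theory of an ordered sum Σ_{i<k} M_i equals the ⊕-product of the depth-d theories of the summands M_i (in order). -/

import Mathlib

open FirstOrder FirstOrder.Language

/-- Quantifier depth of a bounded first-order formula. -/
def qdepth {L : Language} {α : Type*} : ∀ {n : ℕ}, L.BoundedFormula α n → ℕ
  | _, .falsum => 0
  | _, .equal _ _ => 0
  | _, .rel _ _ => 0
  | _, .imp f g => max (qdepth f) (qdepth g)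
  | _, .all f => qdepth f + 1


/-- Ordered sum of a family of structures for a relational language with a
distinguished binary relation `lt`. -/
def orderedSum {L : Language} [L.IsRelational] {k : ℕ} (A : Fin k → Type*)
    (S : ∀ i, L.Structure (A i)) (lt : L.Relations 2) :
    L.Structure (Σ i, A i) where
  funMap := fun f _ => isEmptyElim f
  RelMap := fun {n} R x =>
    (∃ (i : Fin k) (y : Fin n → A i), (∀ j, x j = ⟨i, y j⟩) ∧ (S i).RelMap R y) ∨
    (∃ h : n = 2, HEq R lt ∧
      (x (Fin.cast h.symm 0)).1 < (x (Fin.cast h.symm 1)).1)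

/-- The depth-`d` first-order theory of a structure. -/
def thd {L : Language} (d : ℕ) (α : Type*) (S : L.Structure α) : Set L.Sentence :=
  {φ | qdepth φ ≤ d ∧ @Sentence.Realize L α S φ}

/-- The collection of depth-`d` theories of finite linearly ordered `L`-structures. -/
def theoriesD {L : Language} (lt : L.Relations 2) (d : ℕ) : Set (Set L.Sentence) :=
  {T | ∃ (α : Type) (S : L.Structure α), Finite α ∧
    IsLinearOrder α (fun a b => S.RelMap lt ![a, b]) ∧ T = thd d α S}

namespace StmtAux

open FirstOrder.Language.BoundedFormula

variable {L : Language}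

lemma qdepth_falsum {α : Type*} {n : ℕ} : qdepth (falsum : L.BoundedFormula α n) = 0 := rfl

lemma qdepth_bot {α : Type*} {n : ℕ} : qdepth (⊥ : L.BoundedFormula α n) = 0 := rfl

lemma qdepth_imp {α : Type*} {n : ℕ} (φ ψ : L.BoundedFormula α n) :
    qdepth (φ.imp ψ) = max (qdepth φ) (qdepth ψ) := rfl

lemma qdepth_not {α : Type*} {n : ℕ} (φ : L.BoundedFormula α n) :
    qdepth φ.not = qdepth φ := by
  show qdepth (φ.imp ⊥) = qdepth φ
  rw [qdepth_imp, qdepth_bot, Nat.max_zero]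

lemma qdepth_top {α : Type*} {n : ℕ} : qdepth (⊤ : L.BoundedFormula α n) = 0 := rfl

lemma qdepth_inf {α : Type*} {n : ℕ} (φ ψ : L.BoundedFormula α n) :
    qdepth (φ ⊓ ψ) = max (qdepth φ) (qdepth ψ) := by
  show qdepth ((φ.imp ψ.not).not) = _
  rw [qdepth_not, qdepth_imp, qdepth_not]

lemma qdepth_all {α : Type*} {n : ℕ} (φ : L.BoundedFormula α (n+1)) :
    qdepth φ.all = qdepth φ + 1 := rfl

lemma qdepth_ex {α : Type*} {n : ℕ} (φ : L.BoundedFormula α (n+1)) :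
    qdepth φ.ex = qdepth φ + 1 := by
  show qdepth φ.not.all.not = _
  rw [qdepth_not, qdepth_all, qdepth_not]

lemma term_isVar [L.IsRelational] {γ : Type*} (t : L.Term γ) : ∃ j, t = Term.var j := by
  cases t with
  | var j => exact ⟨j, rfl⟩
  | func f _ => exact isEmptyElim f

end StmtAux

namespace StmtAux

section EF

variable {L : Language} {M N P : Type} [L.Structure M] [L.Structure N] [L.Structure P]

/-- Depth-`d` elementary equivalence of tuples. -/
def Equivd (L : Language) (M N : Type) [L.Structure M] [L.Structure N]
    (d : ℕ) {n : ℕ} (a : Fin n → M) (b : Fin n → N) : Prop :=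
  ∀ φ : L.BoundedFormula Empty n, qdepth φ ≤ d →
    (φ.Realize default a ↔ φ.Realize default b)

/-- Ehrenfeucht–Fraïssé style equivalence of tuples. -/
def EF (L : Language) (M N : Type) [L.Structure M] [L.Structure N] :
    ℕ → {n : ℕ} → (Fin n → M) → (Fin n → N) → Prop
  | 0, _, a, b => Equivd L M N 0 a b
  | (d+1), _, a, b => EF L M N d a b ∧
      (∀ x : M, ∃ y : N, EF L M N d (Fin.snoc a x) (Fin.snoc b y)) ∧
      (∀ y : N, ∃ x : M, EF L M N d (Fin.snoc a x) (Fin.snoc b y))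

lemma Equivd.symm {d n} {a : Fin n → M} {b : Fin n → N} (h : Equivd L M N d a b) :
    Equivd L N M d b a := fun φ hφ => (h φ hφ).symm

lemma Equivd.mono {d d' n} (hd : d ≤ d') {a : Fin n → M} {b : Fin n → N}
    (h : Equivd L M N d' a b) : Equivd L M N d a b :=
  fun φ hφ => h φ (hφ.trans hd)

lemma EF.symm : ∀ {d n} {a : Fin n → M} {b : Fin n → N},
    EF L M N d a b → EF L N M d b a
  | 0, _, _, _, h => Equivd.symm h
  | (d+1), _, _, _, h =>
    ⟨h.1.symm, fun y => let ⟨x, hx⟩ := h.2.2 y; ⟨x, hx.symm⟩,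
      fun x => let ⟨y, hy⟩ := h.2.1 x; ⟨y, hy.symm⟩⟩

lemma EF.succ_mono {d n} {a : Fin n → M} {b : Fin n → N} (h : EF L M N (d+1) a b) :
    EF L M N d a b := h.1

lemma EF.mono : ∀ {d d' : ℕ}, d ≤ d' → ∀ {n} {a : Fin n → M} {b : Fin n → N},
    EF L M N d' a b → EF L M N d a b := by
  intro d d' hd
  induction d' with
  | zero => intro n a b h; obtain rfl : d = 0 := Nat.le_zero.mp hd; exact h
  | succ d' ih =>
    intro n a b h
    rcases Nat.lt_or_ge d (d'+1) with h' | h'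
    · exact ih (Nat.lt_succ_iff.mp h') h.1
    · obtain rfl : d = d' + 1 := le_antisymm hd h'
      exact h

/-- EF-equivalence implies agreement on formulas of bounded quantifier depth. -/
lemma EF.toEquivd : ∀ {n} (φ : L.BoundedFormula Empty n) (d : ℕ), qdepth φ ≤ d →
    ∀ {a : Fin n → M} {b : Fin n → N}, EF L M N d a b →
    (φ.Realize default a ↔ φ.Realize default b) := by
  intro n φ
  induction φ with
  | falsum => exact fun d _ _ _ h => (h.mono (Nat.zero_le _) : Equivd L M N 0 _ _) _ le_rfl
  | @equal n t₁ t₂ => exact fun d _ _ _ h => (h.mono (Nat.zero_le _) : Equivd L M N 0 _ _) _ le_rfl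
  | @rel n r R ts => exact fun d _ _ _ h => (h.mono (Nat.zero_le _) : Equivd L M N 0 _ _) _ le_rfl
  | @imp n f g ihf ihg =>
    intro d hd a b h
    rw [qdepth_imp, max_le_iff] at hd
    simp only [BoundedFormula.realize_imp]
    rw [ihf d hd.1 h, ihg d hd.2 h]
  | @all n f ihf =>
    intro d hd a b h
    rw [qdepth_all] at hd
    obtain ⟨e, rfl⟩ : ∃ e, d = e + 1 := ⟨d - 1, by omega⟩
    have hfe : qdepth f ≤ e := by omega
    simp only [BoundedFormula.realize_all]
    constructor
    · intro H y
      obtain ⟨x, hx⟩ := h.2.2 y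
      exact (ihf e hfe hx).mp (H x)
    · intro H x
      obtain ⟨y, hy⟩ := h.2.1 x
      exact (ihf e hfe hy).mpr (H y)

end EF

end StmtAux

namespace StmtAux

section EF2

variable {L : Language} {M N : Type} [L.Structure M] [L.Structure N]

lemma forth_aux [Finite N] {d n} {a : Fin n → M} {b : Fin n → N}
    (h : Equivd L M N (d+1) a b) (x : M) :
    ∃ y : N, Equivd L M N d (Fin.snoc a x) (Fin.snoc b y) := by
  by_contra hc
  push_neg at hc
  have hψ : ∀ y : N, ∃ ψ : L.BoundedFormula Empty (n+1), qdepth ψ ≤ d ∧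
      ψ.Realize default (Fin.snoc a x) ∧ ¬ ψ.Realize default (Fin.snoc b y) := by
    intro y
    obtain ⟨φ, hφd, hφ⟩ : ∃ φ : L.BoundedFormula Empty (n+1), qdepth φ ≤ d ∧
        ¬ (φ.Realize default (Fin.snoc a x) ↔ φ.Realize default (Fin.snoc b y)) := by
      by_contra hc2
      push_neg at hc2
      exact hc y fun φ hφ => hc2 φ hφ
    rcases Classical.em (φ.Realize default (Fin.snoc a x)) with h1 | h1
    · exact ⟨φ, hφd, h1, fun h2 => hφ ⟨fun _ => h2, fun _ => h1⟩⟩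
    · have h2 : φ.Realize default (Fin.snoc b y) := by
        by_contra h2
        exact hφ ⟨fun h' => absurd h' h1, fun h' => absurd h' h2⟩
      refine ⟨φ.not, by rw [qdepth_not]; exact hφd, ?_, ?_⟩
      · rw [BoundedFormula.realize_not]; exact h1
      · rw [BoundedFormula.realize_not]; exact fun h' => h' h2
  choose ψ hψd hψa hψb using hψ
  cases nonempty_fintype N
  set Φ : L.BoundedFormula Empty (n+1) := BoundedFormula.iInf ψ with hΦ
  have hΦd : qdepth Φ ≤ d := by
    rw [hΦ, BoundedFormula.iInf]
    have : ∀ l : List (L.BoundedFormula Empty (n+1)), (∀ χ ∈ l, qdepth χ ≤ d) →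
        qdepth (l.foldr (· ⊓ ·) ⊤) ≤ d := by
      intro l
      induction l with
      | nil => intro _; simp [qdepth_top]
      | cons χ l ih =>
        intro hl
        rw [List.foldr_cons, qdepth_inf]
        exact max_le (hl χ List.mem_cons_self) (ih fun χ' h' => hl χ' (List.mem_cons_of_mem _ h'))
    refine this _ ?_
    intro χ hχ
    obtain ⟨y, _, rfl⟩ := List.mem_map.mp hχ
    exact hψd y
  have hex : (Φ.ex).Realize (default : Empty → M) a := by
    rw [BoundedFormula.realize_ex]
    refine ⟨x, ?_⟩
    rw [hΦ, BoundedFormula.realize_iInf]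
    exact fun y => hψa y
  have hex' : (Φ.ex).Realize (default : Empty → N) b := by
    refine (h Φ.ex ?_).mp hex
    rw [qdepth_ex]
    omega
  rw [BoundedFormula.realize_ex] at hex'
  obtain ⟨y, hy⟩ := hex'
  rw [hΦ, BoundedFormula.realize_iInf] at hy
  exact hψb y (hy y)

lemma Equivd.toEF [Finite M] [Finite N] : ∀ (d : ℕ) {n} {a : Fin n → M} {b : Fin n → N},
    Equivd L M N d a b → EF L M N d a b := by
  intro d
  induction d with
  | zero => exact fun h => h
  | succ d ih =>
    intro n a b h
    refine ⟨ih (h.mono (Nat.le_succ d)), ?_, ?_⟩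
    · intro x
      obtain ⟨y, hy⟩ := forth_aux h x
      exact ⟨y, ih hy⟩
    · intro y
      obtain ⟨x, hx⟩ := forth_aux h.symm y
      exact ⟨x, ih hx.symm⟩

end EF2

end StmtAux

namespace StmtAux

section Sum2

variable {L : Language} [L.IsRelational]

/-- Binary ordered sum on a `Sum` carrier. -/
def sum2 (L : Language) [L.IsRelational] (M N : Type) [SM : L.Structure M] [SN : L.Structure N]
    (lt : L.Relations 2) : L.Structure (M ⊕ N) where
  funMap := fun f _ => isEmptyElim f
  RelMap := fun {r} R x =>
    (∃ y : Fin r → M, (∀ s, x s = Sum.inl (y s)) ∧ Structure.RelMap R y) ∨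
    (∃ y : Fin r → N, (∀ s, x s = Sum.inr (y s)) ∧ Structure.RelMap R y) ∨
    (∃ h : r = 2, HEq R lt ∧
      (x (Fin.cast h.symm 0)).isLeft ∧ (x (Fin.cast h.symm 1)).isRight)

variable {M N M' N' : Type} [L.Structure M] [L.Structure N] [L.Structure M'] [L.Structure N']

lemma sum2_RelMap (lt : L.Relations 2) {r : ℕ} (R : L.Relations r) (x : Fin r → M ⊕ N) :
    (sum2 L M N lt).RelMap R x ↔
    ((∃ y : Fin r → M, (∀ s, x s = Sum.inl (y s)) ∧ Structure.RelMap R y) ∨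
    (∃ y : Fin r → N, (∀ s, x s = Sum.inr (y s)) ∧ Structure.RelMap R y) ∨
    (∃ h : r = 2, HEq R lt ∧
      (x (Fin.cast h.symm 0)).isLeft ∧ (x (Fin.cast h.symm 1)).isRight)) := Iff.rfl

lemma sum2_rel_mp (lt : L.Relations 2) {m₁ m₂ r : ℕ}
    {c₁ : Fin m₁ → M} {c₁' : Fin m₁ → M'} {c₂ : Fin m₂ → N} {c₂' : Fin m₂ → N'}
    (h₁ : Equivd L M M' 0 c₁ c₁') (h₂ : Equivd L N N' 0 c₂ c₂')
    (R : L.Relations r) (σ : Fin r → Fin m₁ ⊕ Fin m₂)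
    (h : (sum2 L M N lt).RelMap R (fun s => Sum.map c₁ c₂ (σ s))) :
    (sum2 L M' N' lt).RelMap R (fun s => Sum.map c₁' c₂' (σ s)) := by
  rw [sum2_RelMap] at h ⊢
  rcases h with ⟨y, hy, hR⟩ | ⟨y, hy, hR⟩ | ⟨rfl, hR, hl, hr⟩
  · have hσ : ∀ s, ∃ p, σ s = Sum.inl p ∧ y s = c₁ p := by
      intro s
      rcases hσs : σ s with p | q
      · refine ⟨p, rfl, ?_⟩
        have := hy s
        rw [hσs] at this
        simpa using this.symm
      · have := hy s
        rw [hσs] at this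
        simp at this
    choose p hp hyp using hσ
    have hR' : Structure.RelMap R (fun s => c₁ (p s)) := by
      have : y = fun s => c₁ (p s) := funext hyp
      rwa [this] at hR
    have key := h₁ (BoundedFormula.rel R (fun s => Term.var (Sum.inr (p s)))) (Nat.le_refl 0)
    have hR'' : Structure.RelMap R (fun s => c₁' (p s)) := key.mp hR'
    exact Or.inl ⟨fun s => c₁' (p s), fun s => by rw [hp s]; rfl, hR''⟩
  · have hσ : ∀ s, ∃ q, σ s = Sum.inr q ∧ y s = c₂ q := by
      intro s
      rcases hσs : σ s with p | q
      · have := hy s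
        rw [hσs] at this
        simp at this
      · refine ⟨q, rfl, ?_⟩
        have := hy s
        rw [hσs] at this
        simpa using this.symm
    choose q hq hyq using hσ
    have hR' : Structure.RelMap R (fun s => c₂ (q s)) := by
      have : y = fun s => c₂ (q s) := funext hyq
      rwa [this] at hR
    have key := h₂ (BoundedFormula.rel R (fun s => Term.var (Sum.inr (q s)))) (Nat.le_refl 0)
    have hR'' : Structure.RelMap R (fun s => c₂' (q s)) := key.mp hR'
    exact Or.inr (Or.inl ⟨fun s => c₂' (q s), fun s => by rw [hq s]; rfl, hR''⟩)
  · refine Or.inr (Or.inr ⟨rfl, hR, ?_, ?_⟩)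
    · rcases hσs : σ (Fin.cast rfl 0) with p | q
      · simp [hσs]
      · have := hl
        rw [hσs] at this
        simp at this
    · rcases hσs : σ (Fin.cast rfl 1) with p | q
      · have := hr
        rw [hσs] at this
        simp at this
      · simp [hσs]

end Sum2

end StmtAux

namespace StmtAux

section FV

variable {L : Language} [L.IsRelational]
variable {M N M' N' : Type} [L.Structure M] [L.Structure N] [L.Structure M'] [L.Structure N']

lemma FV_zero (lt : L.Relations 2) {m₁ m₂ : ℕ}
    {c₁ : Fin m₁ → M} {c₁' : Fin m₁ → M'} {c₂ : Fin m₂ → N} {c₂' : Fin m₂ → N'}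
    (h₁ : Equivd L M M' 0 c₁ c₁') (h₂ : Equivd L N N' 0 c₂ c₂') :
    ∀ {n} (φ : L.BoundedFormula Empty n), qdepth φ ≤ 0 →
      ∀ (ρ : Fin n → Fin m₁ ⊕ Fin m₂),
      (@BoundedFormula.Realize L (M ⊕ N) (sum2 L M N lt) Empty n φ default
        (fun j => Sum.map c₁ c₂ (ρ j)) ↔
      @BoundedFormula.Realize L (M' ⊕ N') (sum2 L M' N' lt) Empty n φ default
        (fun j => Sum.map c₁' c₂' (ρ j))) := by
  intro n φ
  induction φ with
  | falsum => exact fun _ _ => Iff.rfl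
  | @equal n t₁ t₂ =>
    intro _ ρ
    obtain ⟨j₁, rfl⟩ := term_isVar t₁
    obtain ⟨j₂, rfl⟩ := term_isVar t₂
    rcases j₁ with e | j₁; · exact e.elim
    rcases j₂ with e | j₂; · exact e.elim
    show Sum.map c₁ c₂ (ρ j₁) = Sum.map c₁ c₂ (ρ j₂) ↔
      Sum.map c₁' c₂' (ρ j₁) = Sum.map c₁' c₂' (ρ j₂)
    rcases ρ j₁ with p₁ | q₁ <;> rcases ρ j₂ with p₂ | q₂
    · show Sum.inl (c₁ p₁) = Sum.inl (c₁ p₂) ↔ Sum.inl (c₁' p₁) = Sum.inl (c₁' p₂)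
      simp only [Sum.inl.injEq]
      exact h₁ (BoundedFormula.equal (Term.var (Sum.inr p₁)) (Term.var (Sum.inr p₂)))
        (Nat.le_refl 0)
    · show Sum.inl (c₁ p₁) = Sum.inr (c₂ q₂) ↔ Sum.inl (c₁' p₁) = Sum.inr (c₂' q₂)
      simp
    · show Sum.inr (c₂ q₁) = Sum.inl (c₁ p₂) ↔ Sum.inr (c₂' q₁) = Sum.inl (c₁' p₂)
      simp
    · show Sum.inr (c₂ q₁) = Sum.inr (c₂ q₂) ↔ Sum.inr (c₂' q₁) = Sum.inr (c₂' q₂)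
      simp only [Sum.inr.injEq]
      exact h₂ (BoundedFormula.equal (Term.var (Sum.inr q₁)) (Term.var (Sum.inr q₂)))
        (Nat.le_refl 0)
  | @rel n r R ts =>
    intro _ ρ
    have hts : ∀ s, ∃ js : Fin n, ts s = Term.var (Sum.inr js) := by
      intro s
      obtain ⟨j, hj⟩ := term_isVar (ts s)
      rcases j with e | j
      · exact e.elim
      · exact ⟨j, hj⟩
    choose js hjs using hts
    have hts' : ts = fun s => Term.var (Sum.inr (js s)) := funext hjs
    subst hts'
    show (sum2 L M N lt).RelMap R (fun s => Sum.map c₁ c₂ (ρ (js s))) ↔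
      (sum2 L M' N' lt).RelMap R (fun s => Sum.map c₁' c₂' (ρ (js s)))
    exact ⟨sum2_rel_mp lt h₁ h₂ R (fun s => ρ (js s)),
      sum2_rel_mp lt h₁.symm h₂.symm R (fun s => ρ (js s))⟩
  | @imp n f g ihf ihg =>
    intro hφ ρ
    rw [qdepth_imp, Nat.max_le] at hφ
    simp only [BoundedFormula.realize_imp]
    rw [ihf (Nat.le_of_eq (Nat.le_zero.mp hφ.1)) ρ, ihg (Nat.le_of_eq (Nat.le_zero.mp hφ.2)) ρ]
  | @all n f ihf =>
    intro hφ ρ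
    rw [qdepth_all] at hφ
    exact absurd hφ (Nat.not_succ_le_zero _)

lemma snoc_map_inl {m₁ m₂ n : ℕ} (c₁ : Fin m₁ → M) (c₂ : Fin m₂ → N)
    (ρ : Fin n → Fin m₁ ⊕ Fin m₂) (v : M) :
    Fin.snoc (fun j => Sum.map c₁ c₂ (ρ j)) (Sum.inl v) =
      fun j => Sum.map (Fin.snoc c₁ v : Fin (m₁+1) → M) c₂
        (@Fin.snoc n (fun _ => Fin (m₁+1) ⊕ Fin m₂) (fun j => Sum.map Fin.castSucc id (ρ j)) (Sum.inl (Fin.last m₁)) j) := by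
  funext j
  refine Fin.lastCases ?_ ?_ j
  · simp
  · intro i
    rcases hρ : ρ i with p | q <;> simp [hρ]

lemma snoc_map_inr {m₁ m₂ n : ℕ} (c₁ : Fin m₁ → M) (c₂ : Fin m₂ → N)
    (ρ : Fin n → Fin m₁ ⊕ Fin m₂) (v : N) :
    Fin.snoc (fun j => Sum.map c₁ c₂ (ρ j)) (Sum.inr v) =
      fun j => Sum.map c₁ (Fin.snoc c₂ v : Fin (m₂+1) → N)
        (@Fin.snoc n (fun _ => Fin m₁ ⊕ Fin (m₂+1)) (fun j => Sum.map id Fin.castSucc (ρ j)) (Sum.inr (Fin.last m₂)) j) := by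
  funext j
  refine Fin.lastCases ?_ ?_ j
  · simp
  · intro i
    rcases hρ : ρ i with p | q <;> simp [hρ]

theorem FV_EF (lt : L.Relations 2) : ∀ (d : ℕ) {n m₁ m₂ : ℕ}
    (c₁ : Fin m₁ → M) (c₁' : Fin m₁ → M') (c₂ : Fin m₂ → N) (c₂' : Fin m₂ → N')
    (ρ : Fin n → Fin m₁ ⊕ Fin m₂),
    EF L M M' d c₁ c₁' → EF L N N' d c₂ c₂' →
    @EF L (M ⊕ N) (M' ⊕ N') (sum2 L M N lt) (sum2 L M' N' lt) d n
      (fun j => Sum.map c₁ c₂ (ρ j)) (fun j => Sum.map c₁' c₂' (ρ j)) := by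
  intro d
  induction d with
  | zero =>
    intro n m₁ m₂ c₁ c₁' c₂ c₂' ρ h₁ h₂
    exact fun φ hφ => FV_zero lt h₁ h₂ φ hφ ρ
  | succ d ih =>
    intro n m₁ m₂ c₁ c₁' c₂ c₂' ρ h₁ h₂
    refine ⟨ih c₁ c₁' c₂ c₂' ρ h₁.1 h₂.1, ?_, ?_⟩
    · rintro (v | v)
      · obtain ⟨w, hw⟩ := h₁.2.1 v
        refine ⟨Sum.inl w, ?_⟩
        rw [snoc_map_inl c₁ c₂ ρ v, snoc_map_inl c₁' c₂' ρ w]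
        exact ih _ _ _ _ _ hw h₂.1
      · obtain ⟨w, hw⟩ := h₂.2.1 v
        refine ⟨Sum.inr w, ?_⟩
        rw [snoc_map_inr c₁ c₂ ρ v, snoc_map_inr c₁' c₂' ρ w]
        exact ih _ _ _ _ _ h₁.1 hw
    · rintro (v | v)
      · obtain ⟨w, hw⟩ := h₁.2.2 v
        refine ⟨Sum.inl w, ?_⟩
        rw [snoc_map_inl c₁ c₂ ρ w, snoc_map_inl c₁' c₂' ρ v]
        exact ih _ _ _ _ _ hw h₂.1
      · obtain ⟨w, hw⟩ := h₂.2.2 v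
        refine ⟨Sum.inr w, ?_⟩
        rw [snoc_map_inr c₁ c₂ ρ w, snoc_map_inr c₁' c₂' ρ v]
        exact ih _ _ _ _ _ h₁.1 hw

end FV

end StmtAux

namespace StmtAux

section Bridge

variable {L : Language} [L.IsRelational]

lemma sentence_realize_iff {M : Type} [SM : L.Structure M] (φ : L.Sentence) :
    M ⊨ φ ↔ @BoundedFormula.Realize L M SM Empty 0 φ default default := Iff.rfl

lemma equivd_of_thd_eq {M N : Type} [SM : L.Structure M] [SN : L.Structure N] {d : ℕ}
    (h : thd d M SM = thd d N SN) :
    Equivd L M N d (default : Fin 0 → M) (default : Fin 0 → N) := by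
  intro φ hφ
  constructor
  · intro hr
    have hm : φ ∈ thd d M SM := ⟨hφ, hr⟩
    rw [h] at hm
    exact hm.2
  · intro hr
    have hm : φ ∈ thd d N SN := ⟨hφ, hr⟩
    rw [← h] at hm
    exact hm.2

lemma thd_eq_of_equivd {M N : Type} [SM : L.Structure M] [SN : L.Structure N] {d : ℕ}
    (h : Equivd L M N d (default : Fin 0 → M) (default : Fin 0 → N)) :
    thd d M SM = thd d N SN := by
  ext φ
  exact and_congr_right fun hφ => h φ hφ

lemma thd_eq_of_iso {M N : Type} (SM : L.Structure M) (SN : L.Structure N)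
    (f : @Language.Equiv L M N SM SN) (d : ℕ) : thd d M SM = thd d N SN := by
  letI := SM; letI := SN
  ext φ
  exact and_congr_right fun _ => StrongHomClass.realize_sentence f φ

theorem FV_thd {M N M' N' : Type} [L.Structure M] [L.Structure N] [L.Structure M'] [L.Structure N']
    [Finite M] [Finite N] [Finite M'] [Finite N'] (lt : L.Relations 2) {d : ℕ}
    (h₁ : thd d M ‹L.Structure M› = thd d M' ‹L.Structure M'›)
    (h₂ : thd d N ‹L.Structure N› = thd d N' ‹L.Structure N'›) :
    thd d (M ⊕ N) (sum2 L M N lt) = thd d (M' ⊕ N') (sum2 L M' N' lt) := by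
  letI := sum2 L M N lt; letI := sum2 L M' N' lt
  apply thd_eq_of_equivd
  have e₁ : EF L M M' d (default : Fin 0 → M) (default : Fin 0 → M') :=
    Equivd.toEF d (equivd_of_thd_eq h₁)
  have e₂ : EF L N N' d (default : Fin 0 → N) (default : Fin 0 → N') :=
    Equivd.toEF d (equivd_of_thd_eq h₂)
  have key := FV_EF lt d (default : Fin 0 → M) (default : Fin 0 → M')
    (default : Fin 0 → N) (default : Fin 0 → N') Fin.elim0 e₁ e₂
  have h1 : (fun j : Fin 0 => Sum.map (default : Fin 0 → M) (default : Fin 0 → N) (Fin.elim0 j))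
      = (default : Fin 0 → M ⊕ N) := Subsingleton.elim _ _
  have h2 : (fun j : Fin 0 => Sum.map (default : Fin 0 → M') (default : Fin 0 → N') (Fin.elim0 j))
      = (default : Fin 0 → M' ⊕ N') := Subsingleton.elim _ _
  rw [h1, h2] at key
  exact fun φ hφ => EF.toEquivd φ d hφ key

end Bridge

end StmtAux

namespace StmtAux

section Orders

variable {L : Language} [L.IsRelational]

lemma vec2_eta {α : Type*} (z : Fin 2 → α) : ![z 0, z 1] = z := by
  funext i
  fin_cases i <;> rfl

lemma sum2_rel2_iff {M N : Type} [L.Structure M] [L.Structure N] (lt : L.Relations 2)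
    (x y : M ⊕ N) :
    (sum2 L M N lt).RelMap lt ![x, y] ↔
    ((∃ p q, x = Sum.inl p ∧ y = Sum.inl q ∧ Structure.RelMap lt ![p, q]) ∨
     (∃ p q, x = Sum.inr p ∧ y = Sum.inr q ∧ Structure.RelMap lt ![p, q]) ∨
     (x.isLeft ∧ y.isRight)) := by
  rw [sum2_RelMap]
  constructor
  · rintro (⟨z, hz, hR⟩ | ⟨z, hz, hR⟩ | ⟨h, hR, h0, h1⟩)
    · refine Or.inl ⟨z 0, z 1, hz 0, hz 1, ?_⟩
      rwa [vec2_eta z]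
    · refine Or.inr (Or.inl ⟨z 0, z 1, hz 0, hz 1, ?_⟩)
      rwa [vec2_eta z]
    · refine Or.inr (Or.inr ⟨?_, ?_⟩)
      · simpa using h0
      · simpa using h1
  · rintro (⟨p, q, hx, hy, hR⟩ | ⟨p, q, hx, hy, hR⟩ | ⟨h0, h1⟩)
    · refine Or.inl ⟨![p, q], ?_, hR⟩
      intro s
      fin_cases s <;> simp [hx, hy]
    · refine Or.inr (Or.inl ⟨![p, q], ?_, hR⟩)
      intro s
      fin_cases s <;> simp [hx, hy]
    · refine Or.inr (Or.inr ⟨rfl, HEq.rfl, ?_, ?_⟩)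
      · simpa using h0
      · simpa using h1

lemma orderedSum_RelMap {k : ℕ} (A : Fin k → Type) (S : ∀ i, L.Structure (A i))
    (lt : L.Relations 2) {r : ℕ} (R : L.Relations r) (x : Fin r → Σ i, A i) :
    (orderedSum A S lt).RelMap R x ↔
    ((∃ (i : Fin k) (y : Fin r → A i), (∀ j, x j = ⟨i, y j⟩) ∧ (S i).RelMap R y) ∨
    (∃ h : r = 2, HEq R lt ∧
      (x (Fin.cast h.symm 0)).1 < (x (Fin.cast h.symm 1)).1)) := Iff.rfl

lemma orderedSum_rel2_iff {k : ℕ} (A : Fin k → Type) (S : ∀ i, L.Structure (A i))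
    (lt : L.Relations 2) (x y : Σ i, A i) :
    (orderedSum A S lt).RelMap lt ![x, y] ↔
    ((∃ i p q, x = ⟨i, p⟩ ∧ y = ⟨i, q⟩ ∧ (S i).RelMap lt ![p, q]) ∨ x.1 < y.1) := by
  rw [orderedSum_RelMap]
  constructor
  · rintro (⟨i, z, hz, hR⟩ | ⟨h, hR, hlt⟩)
    · refine Or.inl ⟨i, z 0, z 1, hz 0, hz 1, ?_⟩
      rwa [vec2_eta z]
    · refine Or.inr ?_
      simpa using hlt
  · rintro (⟨i, p, q, hx, hy, hR⟩ | hlt)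
    · refine Or.inl ⟨i, ![p, q], ?_, hR⟩
      intro s
      fin_cases s <;> simp [hx, hy]
    · refine Or.inr ⟨rfl, HEq.rfl, ?_⟩
      simpa using hlt

lemma sum2_isLinearOrder {M N : Type} [L.Structure M] [L.Structure N] (lt : L.Relations 2)
    (hM : IsLinearOrder M fun a b => Structure.RelMap lt ![a, b])
    (hN : IsLinearOrder N fun a b => Structure.RelMap lt ![a, b]) :
    IsLinearOrder (M ⊕ N) fun a b => (sum2 L M N lt).RelMap lt ![a, b] := by
  haveI := hM; haveI := hN
  haveI hrefl : IsRefl (M ⊕ N) (fun a b => (sum2 L M N lt).RelMap lt ![a, b]) := by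
    constructor
    rintro (a | a) <;> rw [sum2_rel2_iff]
    · exact Or.inl ⟨a, a, rfl, rfl, refl_of (fun x y => Structure.RelMap lt ![x, y]) a⟩
    · exact Or.inr (Or.inl ⟨a, a, rfl, rfl, refl_of (fun x y => Structure.RelMap lt ![x, y]) a⟩)
  haveI htrans : IsTrans (M ⊕ N) (fun a b => (sum2 L M N lt).RelMap lt ![a, b]) := by
    constructor
    rintro (a | a) (b | b) (c | c) hab hbc <;>
      rw [sum2_rel2_iff] at hab hbc ⊢ <;>
      simp only [Sum.inl.injEq, Sum.inr.injEq, Sum.isLeft_inl, Sum.isLeft_inr, Sum.isRight_inl,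
        Sum.isRight_inr, reduceCtorEq, false_and, and_false, exists_false, or_false, false_or,
        and_true, true_and, or_true, true_or, exists_and_left, exists_eq_left', exists_eq_left]
        at hab hbc ⊢ <;>
      exact trans_of (fun x y => Structure.RelMap lt ![x, y]) hab hbc
  haveI hanti : IsAntisymm (M ⊕ N) (fun a b => (sum2 L M N lt).RelMap lt ![a, b]) := by
    constructor
    rintro (a | a) (b | b) hab hba <;>
      rw [sum2_rel2_iff] at hab hba <;>
      simp only [Sum.inl.injEq, Sum.inr.injEq, Sum.isLeft_inl, Sum.isLeft_inr, Sum.isRight_inl,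
        Sum.isRight_inr, reduceCtorEq, false_and, and_false, exists_false, or_false, false_or,
        and_true, true_and, or_true, true_or, exists_and_left, exists_eq_left', exists_eq_left]
        at hab hba ⊢ <;>
      exact antisymm_of (fun x y => Structure.RelMap lt ![x, y]) hab hba
  haveI htot : IsTotal (M ⊕ N) (fun a b => (sum2 L M N lt).RelMap lt ![a, b]) := by
    constructor
    rintro (a | a) (b | b)
    · rcases total_of (fun x y => Structure.RelMap lt ![x, y]) a b with h | h
      · exact Or.inl ((sum2_rel2_iff lt _ _).2 (Or.inl ⟨a, b, rfl, rfl, h⟩))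
      · exact Or.inr ((sum2_rel2_iff lt _ _).2 (Or.inl ⟨b, a, rfl, rfl, h⟩))
    · exact Or.inl ((sum2_rel2_iff lt _ _).2 (Or.inr (Or.inr (by simp))))
    · exact Or.inr ((sum2_rel2_iff lt _ _).2 (Or.inr (Or.inr (by simp))))
    · rcases total_of (fun x y => Structure.RelMap lt ![x, y]) a b with h | h
      · exact Or.inl ((sum2_rel2_iff lt _ _).2 (Or.inr (Or.inl ⟨a, b, rfl, rfl, h⟩)))
      · exact Or.inr ((sum2_rel2_iff lt _ _).2 (Or.inr (Or.inl ⟨b, a, rfl, rfl, h⟩)))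
  haveI : IsPreorder (M ⊕ N) (fun a b => (sum2 L M N lt).RelMap lt ![a, b]) := ⟨⟩
  haveI : IsPartialOrder (M ⊕ N) (fun a b => (sum2 L M N lt).RelMap lt ![a, b]) := ⟨⟩
  exact ⟨⟩

end Orders

end StmtAux

namespace StmtAux

section Orders2

variable {L : Language} [L.IsRelational]

lemma orderedSum_isLinearOrder {k : ℕ} (A : Fin k → Type) (S : ∀ i, L.Structure (A i))
    (lt : L.Relations 2) (h : ∀ i, IsLinearOrder (A i) fun a b => (S i).RelMap lt ![a, b]) :
    IsLinearOrder (Σ i, A i) fun a b => (orderedSum A S lt).RelMap lt ![a, b] := by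
  have hrf : ∀ i (x : A i), (S i).RelMap lt ![x, x] := fun i => by
    haveI := h i; exact fun x => refl_of (fun x y => (S i).RelMap lt ![x, y]) x
  have htr : ∀ i (x y z : A i), (S i).RelMap lt ![x, y] → (S i).RelMap lt ![y, z] →
      (S i).RelMap lt ![x, z] := fun i => by
    haveI := h i
    exact fun x y z hxy hyz => trans_of (fun x y => (S i).RelMap lt ![x, y]) hxy hyz
  have has : ∀ i (x y : A i), (S i).RelMap lt ![x, y] → (S i).RelMap lt ![y, x] → x = y :=
    fun i => by
    haveI := h i
    exact fun x y hxy hyx => antisymm_of (fun x y => (S i).RelMap lt ![x, y]) hxy hyx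
  have hto : ∀ i (x y : A i), (S i).RelMap lt ![x, y] ∨ (S i).RelMap lt ![y, x] := fun i => by
    haveI := h i; exact fun x y => total_of (fun x y => (S i).RelMap lt ![x, y]) x y
  haveI hrefl : IsRefl (Σ i, A i) (fun a b => (orderedSum A S lt).RelMap lt ![a, b]) := by
    constructor
    rintro ⟨i, p⟩
    rw [orderedSum_rel2_iff]
    exact Or.inl ⟨i, p, p, rfl, rfl, hrf i p⟩
  haveI htrans : IsTrans (Σ i, A i) (fun a b => (orderedSum A S lt).RelMap lt ![a, b]) := by
    constructor
    rintro ⟨i, p⟩ ⟨j, q⟩ ⟨l, r⟩ hab hbc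
    rw [orderedSum_rel2_iff] at hab hbc ⊢
    rcases hab with ⟨i1, p1, q1, h1, h2, hR⟩ | hlt
    · injection h1 with h1a h1b
      subst h1a
      first
      | obtain rfl := eq_of_heq h1b
      | subst h1b
      injection h2 with h2a h2b
      subst h2a
      first
      | obtain rfl := eq_of_heq h2b
      | subst h2b
      rcases hbc with ⟨i2, p2, q2, h3, h4, hR'⟩ | hlt'
      · injection h3 with h3a h3b
        subst h3a
        first
        | obtain rfl := eq_of_heq h3b
        | subst h3b
        injection h4 with h4a h4b
        subst h4a
        first
        | obtain rfl := eq_of_heq h4b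
        | subst h4b
        exact Or.inl ⟨_, _, _, rfl, rfl, htr _ _ _ _ hR hR'⟩
      · exact Or.inr hlt'
    · rcases hbc with ⟨i2, p2, q2, h3, h4, hR'⟩ | hlt'
      · injection h3 with h3a h3b
        subst h3a
        injection h4 with h4a h4b
        subst h4a
        exact Or.inr hlt
      · exact Or.inr (lt_trans hlt hlt')
  haveI hanti : IsAntisymm (Σ i, A i) (fun a b => (orderedSum A S lt).RelMap lt ![a, b]) := by
    constructor
    rintro ⟨i, p⟩ ⟨j, q⟩ hab hba
    rw [orderedSum_rel2_iff] at hab hba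
    rcases hab with ⟨i1, p1, q1, h1, h2, hR⟩ | hlt
    · injection h1 with h1a h1b
      subst h1a
      first
      | obtain rfl := eq_of_heq h1b
      | subst h1b
      injection h2 with h2a h2b
      subst h2a
      first
      | obtain rfl := eq_of_heq h2b
      | subst h2b
      rcases hba with ⟨i2, p2, q2, h3, h4, hR'⟩ | hlt'
      · injection h3 with h3a h3b
        first
        | subst h3a
        | skip
        first
        | obtain rfl := eq_of_heq h3b
        | subst h3b
        injection h4 with h4a h4b
        first
        | subst h4a
        | skip
        first
        | obtain rfl := eq_of_heq h4b
        | subst h4b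
        exact congrArg (Sigma.mk _) (has _ _ _ hR hR')
      · exact absurd hlt' (lt_irrefl _)
    · rcases hba with ⟨i2, p2, q2, h3, h4, hR'⟩ | hlt'
      · injection h3 with h3a h3b
        subst h3a
        injection h4 with h4a h4b
        subst h4a
        exact absurd hlt (lt_irrefl _)
      · exact absurd hlt' (lt_asymm hlt)
  haveI htot : IsTotal (Σ i, A i) (fun a b => (orderedSum A S lt).RelMap lt ![a, b]) := by
    constructor
    rintro ⟨i, p⟩ ⟨j, q⟩
    rcases lt_trichotomy i j with hlt | rfl | hlt
    · exact Or.inl ((orderedSum_rel2_iff A S lt _ _).2 (Or.inr hlt))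
    · rcases hto i p q with hr | hr
      · exact Or.inl ((orderedSum_rel2_iff A S lt _ _).2 (Or.inl ⟨i, p, q, rfl, rfl, hr⟩))
      · exact Or.inr ((orderedSum_rel2_iff A S lt _ _).2 (Or.inl ⟨i, q, p, rfl, rfl, hr⟩))
    · exact Or.inr ((orderedSum_rel2_iff A S lt _ _).2 (Or.inr hlt))
  haveI : IsPreorder (Σ i, A i) (fun a b => (orderedSum A S lt).RelMap lt ![a, b]) := ⟨⟩
  haveI : IsPartialOrder (Σ i, A i) (fun a b => (orderedSum A S lt).RelMap lt ![a, b]) := ⟨⟩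
  exact ⟨⟩

end Orders2

end StmtAux

namespace StmtAux

section Single

variable {L : Language} [L.IsRelational]

lemma thd_single (A : Fin 1 → Type) (S : ∀ i, L.Structure (A i)) (lt : L.Relations 2) (d : ℕ) :
    thd d (Σ i, A i) (orderedSum A S lt) = thd d (A 0) (S 0) := by
  apply thd_eq_of_iso (orderedSum A S lt) (S 0)
  letI := orderedSum A S lt
  letI := S 0
  refine ⟨⟨fun p => cast (congrArg A (Subsingleton.elim p.1 0)) p.2,
    fun x => ⟨0, x⟩, ?_, fun x => rfl⟩, fun f => isEmptyElim f, ?_⟩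
  · rintro ⟨i, v⟩
    obtain rfl : (0 : Fin 1) = i := Subsingleton.elim _ _
    rfl
  · intro n r x
    show Structure.RelMap r _ ↔ (orderedSum A S lt).RelMap r x
    have hpt : ∀ p : Σ i, A i, p = ⟨0, cast (congrArg A (Subsingleton.elim p.1 0)) p.2⟩ := by
      rintro ⟨i, v⟩
      obtain rfl : (0 : Fin 1) = i := Subsingleton.elim _ _
      rfl
    rw [orderedSum_RelMap]
    constructor
    · intro hR
      exact Or.inl ⟨0, fun s => cast (congrArg A (Subsingleton.elim (x s).1 0)) (x s).2,
        fun s => hpt (x s), hR⟩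
    · rintro (⟨i, y, hy, hR⟩ | ⟨hh, hR, hlt⟩)
      · obtain rfl : (0 : Fin 1) = i := Subsingleton.elim _ _
        have hxy : (fun s => cast (congrArg A (Subsingleton.elim (x s).1 0)) (x s).2) = y := by
          funext s
          rw [hy s]
          rfl
        rw [show ((fun p : Σ i, A i => cast (congrArg A (Subsingleton.elim p.1 0)) p.2) ∘ x)
          = y from hxy]
        exact hR
      · exfalso
        have := Subsingleton.elim (x (Fin.cast hh.symm 0)).1 (x (Fin.cast hh.symm 1)).1
        rw [this] at hlt
        exact lt_irrefl _ hlt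

end Single

end StmtAux

namespace StmtAux

section Split

variable {L : Language} [L.IsRelational]

theorem thd_split (a b : ℕ) (C : Fin (a + b) → Type) (S : ∀ i, L.Structure (C i))
    (lt : L.Relations 2) (d : ℕ) :
    thd d (Σ i, C i) (orderedSum C S lt) =
      thd d ((Σ i : Fin a, C (Fin.castAdd b i)) ⊕ (Σ i : Fin b, C (Fin.natAdd a i)))
        (@sum2 L _ (Σ i : Fin a, C (Fin.castAdd b i)) (Σ i : Fin b, C (Fin.natAdd a i))
          (orderedSum (fun i => C (Fin.castAdd b i)) (fun i => S (Fin.castAdd b i)) lt)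
          (orderedSum (fun i => C (Fin.natAdd a i)) (fun i => S (Fin.natAdd a i)) lt) lt) := by
  letI SL := orderedSum (fun i => C (Fin.castAdd b i)) (fun i => S (Fin.castAdd b i)) lt
  letI SR := orderedSum (fun i => C (Fin.natAdd a i)) (fun i => S (Fin.natAdd a i)) lt
  set T := (Σ i : Fin a, C (Fin.castAdd b i)) ⊕ (Σ i : Fin b, C (Fin.natAdd a i)) with hT
  let F : (Σ i, C i) → T := fun p =>
    Fin.addCases (motive := fun i => C i → T)
      (fun i x => Sum.inl ⟨i, x⟩) (fun i x => Sum.inr ⟨i, x⟩) p.1 p.2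
  have hFl : ∀ (i : Fin a) (x : C (Fin.castAdd b i)), F ⟨Fin.castAdd b i, x⟩ = Sum.inl ⟨i, x⟩ := by
    intro i x
    show (Fin.addCases (motive := fun i => C i → T)
      (fun i x => Sum.inl ⟨i, x⟩) (fun i x => Sum.inr ⟨i, x⟩) (Fin.castAdd b i)) x =
      Sum.inl ⟨i, x⟩
    rw [Fin.addCases_left]
  have hFr : ∀ (i : Fin b) (x : C (Fin.natAdd a i)), F ⟨Fin.natAdd a i, x⟩ = Sum.inr ⟨i, x⟩ := by
    intro i x
    show (Fin.addCases (motive := fun i => C i → T)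
      (fun i x => Sum.inl ⟨i, x⟩) (fun i x => Sum.inr ⟨i, x⟩) (Fin.natAdd a i)) x =
      Sum.inr ⟨i, x⟩
    rw [Fin.addCases_right]
  have hcase : ∀ p : Σ i, C i,
      (∃ (j : Fin a) (v : C (Fin.castAdd b j)), p = ⟨Fin.castAdd b j, v⟩ ∧ F p = Sum.inl ⟨j, v⟩) ∨
      (∃ (j : Fin b) (v : C (Fin.natAdd a j)), p = ⟨Fin.natAdd a j, v⟩ ∧ F p = Sum.inr ⟨j, v⟩) := by
    rintro ⟨i, v⟩
    revert v
    refine Fin.addCases (motive := fun i => ∀ v : C i,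
      (∃ (j : Fin a) (v' : C (Fin.castAdd b j)), (⟨i, v⟩ : Σ i, C i) = ⟨Fin.castAdd b j, v'⟩ ∧
        F ⟨i, v⟩ = Sum.inl ⟨j, v'⟩) ∨
      (∃ (j : Fin b) (v' : C (Fin.natAdd a j)), (⟨i, v⟩ : Σ i, C i) = ⟨Fin.natAdd a j, v'⟩ ∧
        F ⟨i, v⟩ = Sum.inr ⟨j, v'⟩)) ?_ ?_ i
    · intro j v
      exact Or.inl ⟨j, v, rfl, hFl j v⟩
    · intro j v
      exact Or.inr ⟨j, v, rfl, hFr j v⟩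
  let G : T → Σ i, C i := Sum.elim (fun p => ⟨Fin.castAdd b p.1, p.2⟩)
    (fun p => ⟨Fin.natAdd a p.1, p.2⟩)
  have hGF : Function.LeftInverse G F := by
    rintro ⟨i, v⟩
    rcases hcase ⟨i, v⟩ with ⟨j, v', hp, hF⟩ | ⟨j, v', hp, hF⟩ <;> rw [hF, hp] <;> rfl
  have hFG : Function.RightInverse G F := by
    rintro (⟨j, v⟩ | ⟨j, v⟩)
    · exact hFl j v
    · exact hFr j v
  have hxG : ∀ (x : Σ i, C i) (y : (Σ i : Fin a, C (Fin.castAdd b i))),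
      F x = Sum.inl y → x = ⟨Fin.castAdd b y.1, y.2⟩ := by
    intro x y hF
    have := congrArg G hF
    rw [hGF x] at this
    rw [this]
    rfl
  have hxG' : ∀ (x : Σ i, C i) (y : (Σ i : Fin b, C (Fin.natAdd a i))),
      F x = Sum.inr y → x = ⟨Fin.natAdd a y.1, y.2⟩ := by
    intro x y hF
    have := congrArg G hF
    rw [hGF x] at this
    rw [this]
    rfl
  letI := orderedSum C S lt
  letI := @sum2 L _ (Σ i : Fin a, C (Fin.castAdd b i)) (Σ i : Fin b, C (Fin.natAdd a i)) SL SR lt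
  apply thd_eq_of_iso (orderedSum C S lt)
  refine ⟨⟨F, G, hGF, hFG⟩, fun f => isEmptyElim f, ?_⟩
  intro r R x
  show (sum2 L _ _ lt).RelMap R (F ∘ x) ↔ (orderedSum C S lt).RelMap R x
  rw [sum2_RelMap, orderedSum_RelMap]
  constructor
  · rintro (⟨y, hy, hR⟩ | ⟨y, hy, hR⟩ | ⟨rfl, hRlt, hl, hr⟩)
    · -- all points in the left part
      rw [orderedSum_RelMap] at hR
      rcases hR with ⟨j, z, hz, hRz⟩ | ⟨rfl, hRlt, hlt⟩
      · refine Or.inl ⟨Fin.castAdd b j, z, fun s => ?_, hRz⟩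
        have h1 : x s = ⟨Fin.castAdd b (y s).1, (y s).2⟩ := hxG (x s) (y s) (hy s)
        rw [h1, hz s]
      · refine Or.inr ⟨rfl, hRlt, ?_⟩
        have h0 : x (Fin.cast rfl 0) = ⟨Fin.castAdd b (y 0).1, (y 0).2⟩ :=
          hxG _ _ (hy 0)
        have h1 : x (Fin.cast rfl 1) = ⟨Fin.castAdd b (y 1).1, (y 1).2⟩ :=
          hxG _ _ (hy 1)
        show (x (Fin.cast rfl 0)).1 < (x (Fin.cast rfl 1)).1
        rw [h0, h1]
        have : (y (Fin.cast rfl 0)).1 < (y (Fin.cast rfl 1)).1 := hlt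
        rw [Fin.lt_def] at this ⊢
        simpa using this
    · -- all points in the right part
      rw [orderedSum_RelMap] at hR
      rcases hR with ⟨j, z, hz, hRz⟩ | ⟨rfl, hRlt, hlt⟩
      · refine Or.inl ⟨Fin.natAdd a j, z, fun s => ?_, hRz⟩
        have h1 : x s = ⟨Fin.natAdd a (y s).1, (y s).2⟩ := hxG' (x s) (y s) (hy s)
        rw [h1, hz s]
      · refine Or.inr ⟨rfl, hRlt, ?_⟩
        have h0 : x (Fin.cast rfl 0) = ⟨Fin.natAdd a (y 0).1, (y 0).2⟩ :=
          hxG' _ _ (hy 0)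
        have h1 : x (Fin.cast rfl 1) = ⟨Fin.natAdd a (y 1).1, (y 1).2⟩ :=
          hxG' _ _ (hy 1)
        show (x (Fin.cast rfl 0)).1 < (x (Fin.cast rfl 1)).1
        rw [h0, h1]
        have : (y (Fin.cast rfl 0)).1 < (y (Fin.cast rfl 1)).1 := hlt
        rw [Fin.lt_def] at this ⊢
        simpa using this
    · -- left-right crossing
      refine Or.inr ⟨rfl, hRlt, ?_⟩
      show (x (Fin.cast rfl 0)).1 < (x (Fin.cast rfl 1)).1
      rcases hcase (x (Fin.cast rfl 0)) with ⟨j0, v0, hp0, hF0⟩ | ⟨j0, v0, hp0, hF0⟩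
      · rcases hcase (x (Fin.cast rfl 1)) with ⟨j1, v1, hp1, hF1⟩ | ⟨j1, v1, hp1, hF1⟩
        · exfalso
          have : (F ∘ x) (Fin.cast rfl 1) = Sum.inl ⟨j1, v1⟩ := hF1
          have hr' := hr
          rw [this] at hr'
          simp at hr'
        · rw [hp0, hp1, Fin.lt_def]
          simp only [Fin.coe_castAdd, Fin.coe_natAdd]
          omega
      · exfalso
        have : (F ∘ x) (Fin.cast rfl 0) = Sum.inr ⟨j0, v0⟩ := hF0
        have hl' := hl
        rw [this] at hl'
        simp at hl'
  · rintro (⟨i, y, hy, hR⟩ | ⟨rfl, hRlt, hlt⟩)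
    · -- all in one component i of the flat sum
      revert y
      refine Fin.addCases (motive := fun i => ∀ y : Fin r → C i, (∀ j, x j = ⟨i, y j⟩) →
        (S i).RelMap R y → _) ?_ ?_ i
      · intro j y hy hR
        refine Or.inl ⟨fun s => ⟨j, y s⟩, fun s => ?_, ?_⟩
        · show F (x s) = _
          rw [hy s, hFl]
        · rw [orderedSum_RelMap]
          exact Or.inl ⟨j, y, fun s => rfl, hR⟩
      · intro j y hy hR
        refine Or.inr (Or.inl ⟨fun s => ⟨j, y s⟩, fun s => ?_, ?_⟩)
        · show F (x s) = _
          rw [hy s, hFr]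
        · rw [orderedSum_RelMap]
          exact Or.inl ⟨j, y, fun s => rfl, hR⟩
    · -- crossing in the flat sum
      have hlt' : (x (Fin.cast rfl 0)).1 < (x (Fin.cast rfl 1)).1 := hlt
      rcases hcase (x (Fin.cast rfl 0)) with ⟨j0, v0, hp0, hF0⟩ | ⟨j0, v0, hp0, hF0⟩ <;>
        rcases hcase (x (Fin.cast rfl 1)) with ⟨j1, v1, hp1, hF1⟩ | ⟨j1, v1, hp1, hF1⟩
      · -- both left: crossing inside the left component
        refine Or.inl ⟨![⟨j0, v0⟩, ⟨j1, v1⟩], fun s => ?_, ?_⟩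
        · fin_cases s
          · exact hF0
          · exact hF1
        · rw [orderedSum_RelMap]
          refine Or.inr ⟨rfl, hRlt, ?_⟩
          rw [hp0, hp1, Fin.lt_def] at hlt'
          simp only [Fin.coe_castAdd] at hlt'
          show (j0 : Fin a) < j1
          rw [Fin.lt_def]
          exact hlt'
      · -- left-right
        refine Or.inr (Or.inr ⟨rfl, hRlt, ?_, ?_⟩)
        · show ((F ∘ x) (Fin.cast rfl 0)).isLeft
          have : (F ∘ x) (Fin.cast rfl 0) = Sum.inl ⟨j0, v0⟩ := hF0
          rw [this]
          rfl
        · show ((F ∘ x) (Fin.cast rfl 1)).isRight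
          have : (F ∘ x) (Fin.cast rfl 1) = Sum.inr ⟨j1, v1⟩ := hF1
          rw [this]
          rfl
      · -- right-left: impossible
        exfalso
        rw [hp0, hp1, Fin.lt_def] at hlt'
        simp only [Fin.coe_castAdd, Fin.coe_natAdd] at hlt'
        omega
      · -- both right
        refine Or.inr (Or.inl ⟨![⟨j0, v0⟩, ⟨j1, v1⟩], fun s => ?_, ?_⟩)
        · fin_cases s
          · exact hF0
          · exact hF1
        · rw [orderedSum_RelMap]
          refine Or.inr ⟨rfl, hRlt, ?_⟩
          rw [hp0, hp1, Fin.lt_def] at hlt'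
          simp only [Fin.coe_natAdd] at hlt'
          show (j0 : Fin b) < j1
          rw [Fin.lt_def]
          omega

end Split

end StmtAux

namespace StmtAux

section Op

variable {L : Language} [L.IsRelational]

lemma thd_pair (D : Fin 2 → Type) (SD : ∀ i, L.Structure (D i)) (hD : ∀ i, Finite (D i))
    (lt : L.Relations 2) (d : ℕ) :
    thd d (Σ i, D i) (orderedSum D SD lt) =
      thd d (D 0 ⊕ D 1) (@sum2 L _ (D 0) (D 1) (SD 0) (SD 1) lt) := by
  refine (thd_split 1 1 D SD lt d).trans ?_
  letI SL := orderedSum (fun i : Fin 1 => D (Fin.castAdd 1 i)) (fun i => SD (Fin.castAdd 1 i)) lt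
  letI SR := orderedSum (fun i : Fin 1 => D (Fin.natAdd 1 i)) (fun i => SD (Fin.natAdd 1 i)) lt
  letI := SD 0
  letI := SD 1
  haveI : Finite (D 0) := hD 0
  haveI : Finite (D 1) := hD 1
  haveI : ∀ i : Fin 1, Finite (D (Fin.castAdd 1 i)) := fun i => hD _
  haveI : ∀ i : Fin 1, Finite (D (Fin.natAdd 1 i)) := fun i => hD _
  exact FV_thd lt
    (thd_single (fun i : Fin 1 => D (Fin.castAdd 1 i)) (fun i => SD (Fin.castAdd 1 i)) lt d)
    (thd_single (fun i : Fin 1 => D (Fin.natAdd 1 i)) (fun i => SD (Fin.natAdd 1 i)) lt d)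

/-- The composition operation on depth-`d` theories. -/
noncomputable def opD (L : Language) [L.IsRelational] (lt : L.Relations 2) (d : ℕ)
    (T T' : Set L.Sentence) : Set L.Sentence :=
  @dite _ (T ∈ theoriesD lt d ∧ T' ∈ theoriesD lt d) (Classical.dec _)
    (fun h => thd d (h.1.choose ⊕ h.2.choose)
      (@sum2 L _ _ _ h.1.choose_spec.choose h.2.choose_spec.choose lt))
    (fun _ => ∅)

lemma opD_spec (lt : L.Relations 2) {d : ℕ} {M N : Type} (SM : L.Structure M)
    (SN : L.Structure N) (finM : Finite M) (finN : Finite N)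
    (hM : IsLinearOrder M fun a b => SM.RelMap lt ![a, b])
    (hN : IsLinearOrder N fun a b => SN.RelMap lt ![a, b]) :
    opD L lt d (thd d M SM) (thd d N SN) = thd d (M ⊕ N) (@sum2 L _ M N SM SN lt) := by
  have hc : thd d M SM ∈ theoriesD lt d ∧ thd d N SN ∈ theoriesD lt d :=
    ⟨⟨M, SM, finM, hM, rfl⟩, ⟨N, SN, finN, hN, rfl⟩⟩
  show @dite _ _ (Classical.dec _) _ _ = _
  rw [dif_pos hc]
  obtain ⟨fin1, lin1, heq1⟩ := hc.1.choose_spec.choose_spec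
  obtain ⟨fin2, lin2, heq2⟩ := hc.2.choose_spec.choose_spec
  letI := hc.1.choose_spec.choose
  letI := hc.2.choose_spec.choose
  letI := SM
  letI := SN
  haveI := fin1
  haveI := fin2
  haveI := finM
  haveI := finN
  exact FV_thd lt heq1.symm heq2.symm

lemma opD_mem (lt : L.Relations 2) {d : ℕ} {M N : Type} (SM : L.Structure M)
    (SN : L.Structure N) (finM : Finite M) (finN : Finite N)
    (hM : IsLinearOrder M fun a b => SM.RelMap lt ![a, b])
    (hN : IsLinearOrder N fun a b => SN.RelMap lt ![a, b]) :
    thd d (M ⊕ N) (@sum2 L _ M N SM SN lt) ∈ theoriesD lt d := by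
  refine ⟨M ⊕ N, @sum2 L _ M N SM SN lt, ?_, ?_, rfl⟩
  · haveI := finM; haveI := finN
    infer_instance
  · letI := SM; letI := SN
    exact sum2_isLinearOrder lt hM hN

end Op

end StmtAux

namespace StmtAux

section Assoc

variable {L : Language} [L.IsRelational]

lemma thd_sum2_assoc (lt : L.Relations 2) {d : ℕ} {M₁ M₂ M₃ : Type}
    (S₁ : L.Structure M₁) (S₂ : L.Structure M₂) (S₃ : L.Structure M₃)
    (f₁ : Finite M₁) (f₂ : Finite M₂) (f₃ : Finite M₃) :
    thd d ((M₁ ⊕ M₂) ⊕ M₃) (@sum2 L _ (M₁ ⊕ M₂) M₃ (@sum2 L _ M₁ M₂ S₁ S₂ lt) S₃ lt) =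
    thd d (M₁ ⊕ (M₂ ⊕ M₃)) (@sum2 L _ M₁ (M₂ ⊕ M₃) S₁ (@sum2 L _ M₂ M₃ S₂ S₃ lt) lt) := by
  let C : Fin 3 → Type := ![M₁, M₂, M₃]
  let SC : ∀ i, L.Structure (C i) := Fin.cons S₁ (Fin.cons S₂ (Fin.cons S₃ (fun i => i.elim0)))
  have hfin : ∀ i, Finite (C i) := Fin.cons f₁ (Fin.cons f₂ (Fin.cons f₃ (fun i => i.elim0)))
  haveI := f₁; haveI := f₂; haveI := f₃
  have hL : thd d (Σ i, C i) (orderedSum C SC lt) =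
      thd d ((M₁ ⊕ M₂) ⊕ M₃) (@sum2 L _ (M₁ ⊕ M₂) M₃ (@sum2 L _ M₁ M₂ S₁ S₂ lt) S₃ lt) := by
    refine (thd_split 2 1 C SC lt d).trans ?_
    letI SL := orderedSum (fun i : Fin 2 => C (Fin.castAdd 1 i)) (fun i => SC (Fin.castAdd 1 i)) lt
    letI SR := orderedSum (fun i : Fin 1 => C (Fin.natAdd 2 i)) (fun i => SC (Fin.natAdd 2 i)) lt
    letI := @sum2 L _ M₁ M₂ S₁ S₂ lt
    letI := S₃
    haveI : ∀ i : Fin 2, Finite (C (Fin.castAdd 1 i)) := fun i => hfin _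
    haveI : ∀ i : Fin 1, Finite (C (Fin.natAdd 2 i)) := fun i => hfin _
    have h1 : thd d (Σ i : Fin 2, C (Fin.castAdd 1 i)) SL =
        thd d (M₁ ⊕ M₂) (@sum2 L _ M₁ M₂ S₁ S₂ lt) :=
      thd_pair (fun i : Fin 2 => C (Fin.castAdd 1 i)) (fun i => SC (Fin.castAdd 1 i))
        (fun i => hfin _) lt d
    have h2 : thd d (Σ i : Fin 1, C (Fin.natAdd 2 i)) SR = thd d M₃ S₃ :=
      thd_single (fun i : Fin 1 => C (Fin.natAdd 2 i)) (fun i => SC (Fin.natAdd 2 i)) lt d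
    exact FV_thd lt h1 h2
  have hR : thd d (Σ i, C i) (orderedSum C SC lt) =
      thd d (M₁ ⊕ (M₂ ⊕ M₃)) (@sum2 L _ M₁ (M₂ ⊕ M₃) S₁ (@sum2 L _ M₂ M₃ S₂ S₃ lt) lt) := by
    refine (thd_split 1 2 C SC lt d).trans ?_
    letI SL := orderedSum (fun i : Fin 1 => C (Fin.castAdd 2 i)) (fun i => SC (Fin.castAdd 2 i)) lt
    letI SR := orderedSum (fun i : Fin 2 => C (Fin.natAdd 1 i)) (fun i => SC (Fin.natAdd 1 i)) lt
    letI := @sum2 L _ M₂ M₃ S₂ S₃ lt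
    letI := S₁
    haveI : ∀ i : Fin 1, Finite (C (Fin.castAdd 2 i)) := fun i => hfin _
    haveI : ∀ i : Fin 2, Finite (C (Fin.natAdd 1 i)) := fun i => hfin _
    have h1 : thd d (Σ i : Fin 1, C (Fin.castAdd 2 i)) SL = thd d M₁ S₁ :=
      thd_single (fun i : Fin 1 => C (Fin.castAdd 2 i)) (fun i => SC (Fin.castAdd 2 i)) lt d
    have h2 : thd d (Σ i : Fin 2, C (Fin.natAdd 1 i)) SR =
        thd d (M₂ ⊕ M₃) (@sum2 L _ M₂ M₃ S₂ S₃ lt) :=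
      thd_pair (fun i : Fin 2 => C (Fin.natAdd 1 i)) (fun i => SC (Fin.natAdd 1 i))
        (fun i => hfin _) lt d
    exact FV_thd lt h1 h2
  exact hL.symm.trans hR

end Assoc

end StmtAux

namespace StmtAux

section Main

variable {L : Language} [L.IsRelational]

lemma main_aux (lt : L.Relations 2) (d : ℕ) : ∀ (k : ℕ) (A : Fin (k + 1) → Type)
    (S : ∀ i, L.Structure (A i)), (∀ i, Finite (A i)) →
    (∀ i, IsLinearOrder (A i) fun a b => (S i).RelMap lt ![a, b]) →
    thd d (Σ i, A i) (orderedSum A S lt) =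
      List.foldl (opD L lt d) (thd d (A 0) (S 0))
        (List.ofFn fun i : Fin k => thd d (A i.succ) (S i.succ)) := by
  intro k
  induction k with
  | zero =>
    intro A S _ _
    simpa using thd_single A S lt d
  | succ k ih =>
    intro A S hfin hlin
    letI SX := orderedSum (fun i : Fin (k+1) => A (Fin.castAdd 1 i))
      (fun i => S (Fin.castAdd 1 i)) lt
    letI SY := orderedSum (fun i : Fin 1 => A (Fin.natAdd (k+1) i))
      (fun i => S (Fin.natAdd (k+1) i)) lt
    haveI : ∀ i : Fin (k+1), Finite (A (Fin.castAdd 1 i)) := fun i => hfin _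
    haveI : ∀ i : Fin 1, Finite (A (Fin.natAdd (k+1) i)) := fun i => hfin _
    have finX : Finite (Σ i : Fin (k+1), A (Fin.castAdd 1 i)) := inferInstance
    have finY : Finite (Σ i : Fin 1, A (Fin.natAdd (k+1) i)) := inferInstance
    have linX : IsLinearOrder (Σ i : Fin (k+1), A (Fin.castAdd 1 i))
        (fun a b => SX.RelMap lt ![a, b]) :=
      orderedSum_isLinearOrder _ _ lt (fun i => hlin _)
    have linY : IsLinearOrder (Σ i : Fin 1, A (Fin.natAdd (k+1) i))
        (fun a b => SY.RelMap lt ![a, b]) :=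
      orderedSum_isLinearOrder _ _ lt (fun i => hlin _)
    have e1 : thd d (Σ i, A i) (orderedSum A S lt) =
        thd d ((Σ i : Fin (k+1), A (Fin.castAdd 1 i)) ⊕ (Σ i : Fin 1, A (Fin.natAdd (k+1) i)))
          (@sum2 L _ _ _ SX SY lt) := thd_split (k+1) 1 A S lt d
    have e3 : opD L lt d (thd d (Σ i : Fin (k+1), A (Fin.castAdd 1 i)) SX)
        (thd d (Σ i : Fin 1, A (Fin.natAdd (k+1) i)) SY) =
        thd d ((Σ i : Fin (k+1), A (Fin.castAdd 1 i)) ⊕ (Σ i : Fin 1, A (Fin.natAdd (k+1) i)))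
          (@sum2 L _ _ _ SX SY lt) :=
      opD_spec lt SX SY finX finY linX linY
    have e2 : thd d (Σ i : Fin 1, A (Fin.natAdd (k+1) i)) SY =
        thd d (A (Fin.last k).succ) (S (Fin.last k).succ) :=
      thd_single (fun i : Fin 1 => A (Fin.natAdd (k+1) i)) (fun i => S (Fin.natAdd (k+1) i)) lt d
    have e4 : thd d (Σ i : Fin (k+1), A (Fin.castAdd 1 i)) SX =
        List.foldl (opD L lt d) (thd d (A 0) (S 0))
          (List.ofFn fun i : Fin k => thd d (A i.castSucc.succ) (S i.castSucc.succ)) :=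
      ih (fun i => A (Fin.castAdd 1 i)) (fun i => S (Fin.castAdd 1 i))
        (fun i => hfin _) (fun i => hlin _)
    calc thd d (Σ i, A i) (orderedSum A S lt)
        = thd d ((Σ i : Fin (k+1), A (Fin.castAdd 1 i)) ⊕ (Σ i : Fin 1, A (Fin.natAdd (k+1) i)))
          (@sum2 L _ _ _ SX SY lt) := e1
      _ = opD L lt d (thd d (Σ i : Fin (k+1), A (Fin.castAdd 1 i)) SX)
          (thd d (Σ i : Fin 1, A (Fin.natAdd (k+1) i)) SY) := e3.symm
      _ = opD L lt d (List.foldl (opD L lt d) (thd d (A 0) (S 0))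
            (List.ofFn fun i : Fin k => thd d (A i.castSucc.succ) (S i.castSucc.succ)))
          (thd d (A (Fin.last k).succ) (S (Fin.last k).succ)) := by rw [e2, e4]
      _ = List.foldl (opD L lt d) (thd d (A 0) (S 0))
            ((List.ofFn fun i : Fin k => thd d (A i.castSucc.succ) (S i.castSucc.succ)) ++
              [thd d (A (Fin.last k).succ) (S (Fin.last k).succ)]) :=
        (List.foldl_concat _ _ _ _).symm
      _ = List.foldl (opD L lt d) (thd d (A 0) (S 0))
            (List.ofFn fun i : Fin (k+1) => thd d (A i.succ) (S i.succ)) := by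
        rw [List.ofFn_succ' (fun i : Fin (k+1) => thd d (A i.succ) (S i.succ))]
        rw [List.concat_eq_append]

end Main

end StmtAux

open StmtAux in
theorem stmt_8 {L : Language} [L.IsRelational] [∀ n, Finite (L.Relations n)]
    (lt : L.Relations 2) (d : ℕ) :
    ∃ op : Set L.Sentence → Set L.Sentence → Set L.Sentence,
      (∀ T₁ ∈ theoriesD lt d, ∀ T₂ ∈ theoriesD lt d, ∀ T₃ ∈ theoriesD lt d,
        op (op T₁ T₂) T₃ = op T₁ (op T₂ T₃)) ∧
      (∀ (k : ℕ) (A : Fin (k + 1) → Type) (S : ∀ i, L.Structure (A i)),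
        (∀ i, Finite (A i)) →
        (∀ i, IsLinearOrder (A i) (fun a b => (S i).RelMap lt ![a, b])) →
        thd d (Σ i, A i) (orderedSum A S lt) =
          List.foldl op (thd d (A 0) (S 0))
            (List.ofFn fun i : Fin k => thd d (A i.succ) (S i.succ))) := by
  refine ⟨opD L lt d, ?_, ?_⟩
  · rintro T₁ ⟨M₁, S₁, f₁, l₁, rfl⟩ T₂ ⟨M₂, S₂, f₂, l₂, rfl⟩ T₃ ⟨M₃, S₃, f₃, l₃, rfl⟩
    haveI := f₁; haveI := f₂; haveI := f₃
    have lin12 : IsLinearOrder (M₁ ⊕ M₂)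
        (fun a b => (@sum2 L _ M₁ M₂ S₁ S₂ lt).RelMap lt ![a, b]) := by
      letI := S₁; letI := S₂
      exact sum2_isLinearOrder lt l₁ l₂
    have lin23 : IsLinearOrder (M₂ ⊕ M₃)
        (fun a b => (@sum2 L _ M₂ M₃ S₂ S₃ lt).RelMap lt ![a, b]) := by
      letI := S₂; letI := S₃
      exact sum2_isLinearOrder lt l₂ l₃
    rw [opD_spec lt S₁ S₂ f₁ f₂ l₁ l₂, opD_spec lt S₂ S₃ f₂ f₃ l₂ l₃,
      opD_spec lt (@sum2 L _ M₁ M₂ S₁ S₂ lt) S₃ inferInstance f₃ lin12 l₃,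
      opD_spec lt S₁ (@sum2 L _ M₂ M₃ S₂ S₃ lt) f₁ inferInstance l₁ lin23]
    exact thd_sum2_assoc lt S₁ S₂ S₃ f₁ f₂ f₃
  · intro k A S hfin hlin
    exact main_aux lt d k A S hfin hlin
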